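/- Every locally indicable group is left-orderable. (Burns–Hale theorem, Theorem 2.6 of the paper.) -/

import Mathlib

/-- A group `G` is left-orderable if there is a strict total order `<` on `G` such that
`g < h` implies `f*g < f*h` for all `f, g, h`. -/
def LeftOrderable (G : Type*) [Group G] : Prop :=
  ∃ r : G → G → Prop, IsStrictTotalOrder G r ∧ ∀ f g h : G, r g h → r (f * g) (f * h)

/-- A group `G` is locally indicable if every nontrivial finitely generated subgroup of `G`
admits a surjective group homomorphism onto the integers. -/
def LocallyIndicable (G : Type*) [Group G] : Prop :=
  ∀ H : Subgroup G, H.FG → H ≠ ⊥ → ∃ φ : H →* Multiplicative ℤ, Function.Surjective φ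

/-- The set of signed generators. -/
private def BHset {G : Type*} [Group G] (F : Finset G) (ε : G → Bool) : Set G :=
  {x | ∃ g ∈ F, g ≠ 1 ∧ x = if ε g then g else g⁻¹}

open Classical in
/-- `toAdd ∘ φ` extended by zero to all of `G`. -/
private noncomputable def BHpsi {G : Type*} [Group G] (H : Subgroup G)
    (φ : H →* Multiplicative ℤ) (g : G) : ℤ :=
  if hg : g ∈ H then (φ ⟨g, hg⟩).toAdd else 0

private lemma BHpsi_mul {G : Type*} [Group G] {H : Subgroup G} {φ : H →* Multiplicative ℤ}
    {x y : G} (hx : x ∈ H) (hy : y ∈ H) : BHpsi H φ (x * y) = BHpsi H φ x + BHpsi H φ y := by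
  simp only [BHpsi, dif_pos hx, dif_pos hy, dif_pos (mul_mem hx hy)]
  rw [show (⟨x * y, mul_mem hx hy⟩ : H) = ⟨x, hx⟩ * ⟨y, hy⟩ from rfl, map_mul, toAdd_mul]

private lemma BHpsi_inv {G : Type*} [Group G] {H : Subgroup G} {φ : H →* Multiplicative ℤ}
    {x : G} (hx : x ∈ H) : BHpsi H φ x⁻¹ = -BHpsi H φ x := by
  simp only [BHpsi, dif_pos hx, dif_pos (inv_mem hx)]
  rw [show (⟨x⁻¹, inv_mem hx⟩ : H) = (⟨x, hx⟩ : H)⁻¹ from rfl, map_inv, toAdd_inv]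

private lemma BHpsi_one {G : Type*} [Group G] {H : Subgroup G} {φ : H →* Multiplicative ℤ} :
    BHpsi H φ (1 : G) = 0 := by
  simp only [BHpsi, dif_pos (one_mem H)]
  rw [show (⟨(1 : G), one_mem H⟩ : H) = 1 from rfl, map_one, toAdd_one]

/-- Key finite step of Burns–Hale: for every finite subset there is a choice of signs such
that the subsemigroup generated by the signed nontrivial elements misses `1`. -/
private lemma BHkey {G : Type*} [Group G] (hG : LocallyIndicable G) :
    ∀ F : Finset G, ∃ ε : G → Bool, (1 : G) ∉ Subsemigroup.closure (BHset F ε) := by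
  classical
  suffices h : ∀ n (F : Finset G), F.card ≤ n →
      ∃ ε : G → Bool, (1 : G) ∉ Subsemigroup.closure (BHset F ε) by
    intro F; exact h F.card F le_rfl
  intro n
  induction n with
  | zero =>
    intro F hF
    refine ⟨fun _ => true, ?_⟩
    have : F = ∅ := Finset.card_eq_zero.mp (Nat.le_zero.mp hF)
    subst this
    have : BHset (∅ : Finset G) (fun _ => true) = ∅ := by
      ext x; simp [BHset]
    rw [this, Subsemigroup.closure_empty]
    exact Subsemigroup.notMem_bot
  | succ n ih =>
    intro F hF
    set F' : Finset G := F.filter (fun g => g ≠ 1) with hF'def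
    have hset : ∀ ε, BHset F ε = BHset F' ε := by
      intro ε; ext x
      constructor
      · rintro ⟨g, hg, hg1, rfl⟩; exact ⟨g, Finset.mem_filter.mpr ⟨hg, hg1⟩, hg1, rfl⟩
      · rintro ⟨g, hg, hg1, rfl⟩; exact ⟨g, (Finset.mem_filter.mp hg).1, hg1, rfl⟩
    by_cases hFe : F' = ∅
    · refine ⟨fun _ => true, ?_⟩
      rw [hset]
      have : BHset F' (fun _ => true) = ∅ := by
        ext x; simp [BHset, hFe]
      rw [this, Subsemigroup.closure_empty]
      exact Subsemigroup.notMem_bot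
    · -- the subgroup generated by F'
      set H : Subgroup G := Subgroup.closure (F' : Set G) with hHdef
      have hmemH : ∀ g ∈ F', g ∈ H := fun g hg => Subgroup.subset_closure hg
      have hHfg : H.FG := ⟨F', rfl⟩
      obtain ⟨g₀, hg₀⟩ := Finset.nonempty_iff_ne_empty.mpr hFe
      have hg₀1 : g₀ ≠ 1 := (Finset.mem_filter.mp hg₀).2
      have hHbot : H ≠ ⊥ := by
        intro hbot
        exact hg₀1 ((Subgroup.eq_bot_iff_forall H).mp hbot g₀ (hmemH g₀ hg₀))
      obtain ⟨φ, hφ⟩ := hG H hHfg hHbot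
      set ψ : G → ℤ := BHpsi H φ with hψdef
      set F₁ : Finset G := F'.filter (fun g => ψ g = 0) with hF₁def
      set F₂ : Finset G := F'.filter (fun g => ψ g ≠ 0) with hF₂def
      -- F₂ is nonempty, since φ is surjective
      have hF₂ne : F₂.Nonempty := by
        by_contra hne
        rw [Finset.not_nonempty_iff_eq_empty] at hne
        have hall : ∀ g ∈ F', ψ g = 0 := by
          intro g hg
          by_contra hg0
          exact (Finset.notMem_empty g) (hne ▸ Finset.mem_filter.mpr ⟨hg, hg0⟩)
        have htriv : ∀ x : H, φ x = 1 := by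
          rintro ⟨x, hx⟩
          refine Subgroup.closure_induction
            (p := fun y (hy : y ∈ Subgroup.closure (F' : Set G)) => φ ⟨y, hy⟩ = 1)
            ?_ ?_ ?_ ?_ hx
          · intro y hy
            have := hall y hy
            rw [hψdef] at this
            simp only [BHpsi, dif_pos (hmemH y hy)] at this
            exact Multiplicative.toAdd.injective (by simpa using this)
          · exact map_one φ
          · intro x y hx hy hpx hpy
            rw [show (⟨x * y, mul_mem hx hy⟩ : H) = ⟨x, hx⟩ * ⟨y, hy⟩ from rfl, map_mul,
              hpx, hpy, one_mul]
          · intro x hx hpx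
            rw [show (⟨x⁻¹, inv_mem hx⟩ : H) = (⟨x, hx⟩ : H)⁻¹ from rfl, map_inv, hpx, inv_one]
        obtain ⟨x, hx⟩ := hφ (Multiplicative.ofAdd 1)
        rw [htriv x] at hx
        have h01 : (0 : ℤ) = 1 := by simpa using congrArg Multiplicative.toAdd hx
        exact zero_ne_one h01
      -- F₁ is strictly smaller than F
      have hF₁card : F₁.card ≤ n := by
        have hsub : F₁ ⊂ F := by
          refine Finset.ssubset_iff_of_subset
            ((Finset.filter_subset _ _).trans (Finset.filter_subset _ _)) |>.mpr ?_
          obtain ⟨g, hg⟩ := hF₂ne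
          refine ⟨g, (Finset.filter_subset _ _) ((Finset.filter_subset _ _) hg), ?_⟩
          intro hgF₁
          exact (Finset.mem_filter.mp hg).2 (Finset.mem_filter.mp hgF₁).2
        have := Finset.card_lt_card hsub
        omega
      obtain ⟨ε₁, hε₁⟩ := ih F₁ hF₁card
      -- the combined sign choice
      set ε : G → Bool := fun g => if ψ g ≠ 0 then decide (0 < ψ g) else ε₁ g with hεdef
      refine ⟨ε, ?_⟩
      rw [hset]
      intro h1
      -- closure induction
      have main : ∀ x ∈ Subsemigroup.closure (BHset F' ε), x ∈ H ∧
          ((x ∈ Subsemigroup.closure (BHset F₁ ε₁) ∧ ψ x = 0) ∨ 0 < ψ x) := by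
        intro x hx
        refine Subsemigroup.closure_induction (p := fun y _ => y ∈ H ∧
          ((y ∈ Subsemigroup.closure (BHset F₁ ε₁) ∧ ψ y = 0) ∨ 0 < ψ y)) ?_ ?_ hx
        · rintro y ⟨g, hg, hg1, rfl⟩
          have hgH : g ∈ H := hmemH g hg
          by_cases hg0 : ψ g = 0
          · have hε : ε g = ε₁ g := by simp [hεdef, hg0]
            have hmem1 : (if ε g then g else g⁻¹) ∈ BHset F₁ ε₁ := by
              refine ⟨g, Finset.mem_filter.mpr ⟨hg, hg0⟩, hg1, by rw [hε]⟩
            refine ⟨?_, Or.inl ⟨Subsemigroup.subset_closure hmem1, ?_⟩⟩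
            · by_cases hb : ε g <;> simp [hb, hgH, inv_mem hgH]
            · by_cases hb : ε g = true
              · rw [if_pos hb]; exact hg0
              · rw [if_neg hb, show ψ g⁻¹ = -ψ g from BHpsi_inv hgH, hg0, neg_zero]
          · have hε : ε g = decide (0 < ψ g) := by simp [hεdef, hg0]
            rcases lt_or_gt_of_ne hg0 with hlt | hgt
            · have hb : ε g = false := by rw [hε]; simpa using not_lt.mpr hlt.le
              refine ⟨?_, Or.inr ?_⟩
              · simp [hb, inv_mem hgH]
              · simp only [hb, if_neg Bool.false_ne_true]
                rw [show ψ g⁻¹ = -ψ g from BHpsi_inv hgH]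
                omega
            · have hb : ε g = true := by rw [hε]; simpa using hgt
              exact ⟨by simp [hb, hgH], Or.inr (by simpa [hb] using hgt)⟩
        · rintro x y hx hy ⟨hxH, hxc⟩ ⟨hyH, hyc⟩
          have hxyH : x * y ∈ H := mul_mem hxH hyH
          have hψxy : ψ (x * y) = ψ x + ψ y := BHpsi_mul hxH hyH
          refine ⟨hxyH, ?_⟩
          rcases hxc with ⟨hx1, hx0⟩ | hxp
          · rcases hyc with ⟨hy1, hy0⟩ | hyp
            · exact Or.inl ⟨mul_mem hx1 hy1, by omega⟩
            · exact Or.inr (by omega)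
          · rcases hyc with ⟨hy1, hy0⟩ | hyp
            · exact Or.inr (by omega)
            · exact Or.inr (by omega)
      obtain ⟨-, hc⟩ := main 1 h1
      rcases hc with ⟨hc1, -⟩ | hcp
      · exact hε₁ hc1
      · rw [show ψ (1 : G) = 0 from BHpsi_one] at hcp
        exact lt_irrefl 0 hcp


/-- Burns–Hale: every locally indicable group is left-orderable. -/
theorem burns_hale (G : Type*) [Group G] (hG : LocallyIndicable G) : LeftOrderable G := by
  classical
  choose E hE using BHkey hG
  obtain ⟨U, hU⟩ := Ultrafilter.exists_le (Filter.atTop : Filter (Finset G))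
  -- membership helper
  have hup : ∀ F₀ : Finset G, {F | F₀ ⊆ F} ∈ U := by
    intro F₀
    exact hU (Filter.eventually_ge_atTop F₀)
  have hsignedmem : ∀ (F : Finset G) (g : G), g ∈ F → g ≠ 1 →
      (if E F g then g else g⁻¹) ∈ BHset F (E F) := by
    intro F g hg hg1; exact ⟨g, hg, hg1, rfl⟩
  -- the positive cone
  set P : G → Prop := fun g => g ≠ 1 ∧ {F | E F g = true} ∈ U with hPdef
  -- P is closed under multiplication
  have Pmul : ∀ g h : G, P g → P h → g * h ≠ 1 → P (g * h) := by
    rintro g h ⟨hg1, hgU⟩ ⟨hh1, hhU⟩ hgh1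
    refine ⟨hgh1, ?_⟩
    have hS : {F | E F g = true} ∩ {F | E F h = true} ∩ {F | ({g, h, g * h} : Finset G) ⊆ F} ∈ U :=
      Filter.inter_mem (Filter.inter_mem hgU hhU) (hup _)
    refine U.toFilter.mem_of_superset hS ?_
    rintro F ⟨⟨hFg, hFh⟩, hFsub⟩
    simp only [Set.mem_setOf_eq] at hFg hFh ⊢
    by_contra hFgh
    have hFgh' : E F (g * h) = false := by simpa using hFgh
    apply hE F
    have m1 : g ∈ Subsemigroup.closure (BHset F (E F)) := by
      have := hsignedmem F g (hFsub (by simp)) hg1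
      rw [if_pos hFg] at this
      exact Subsemigroup.subset_closure this
    have m2 : h ∈ Subsemigroup.closure (BHset F (E F)) := by
      have := hsignedmem F h (hFsub (by simp)) hh1
      rw [if_pos hFh] at this
      exact Subsemigroup.subset_closure this
    have m3 : (g * h)⁻¹ ∈ Subsemigroup.closure (BHset F (E F)) := by
      have := hsignedmem F (g * h) (hFsub (by simp)) hgh1
      rw [if_neg (by simp [hFgh'])] at this
      exact Subsemigroup.subset_closure this
    have hall : (g * h) * (g * h)⁻¹ ∈ Subsemigroup.closure (BHset F (E F)) :=
      mul_mem (mul_mem m1 m2) m3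
    rwa [mul_inv_cancel] at hall
  -- totality
  have Ptotal : ∀ g : G, g ≠ 1 → P g ∨ P g⁻¹ := by
    intro g hg1
    have hginv1 : g⁻¹ ≠ 1 := by simpa using hg1
    have hT : {F | ({g, g⁻¹} : Finset G) ⊆ F} ∈ U := hup _
    have hsub : {F : Finset G | ({g, g⁻¹} : Finset G) ⊆ F} ⊆
        {F | E F g = true} ∪ {F | E F g⁻¹ = true} := by
      intro F hFsub
      by_cases hFg : E F g = true
      · exact Or.inl hFg
      · right
        simp only [Set.mem_setOf_eq]
        by_contra hFgi
        have hFg' : E F g = false := by simpa using hFg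
        have hFgi' : E F g⁻¹ = false := by simpa using hFgi
        apply hE F
        have m1 : g⁻¹ ∈ Subsemigroup.closure (BHset F (E F)) := by
          have := hsignedmem F g (hFsub (by simp)) hg1
          rw [if_neg (by simp [hFg'])] at this
          exact Subsemigroup.subset_closure this
        have m2 : g ∈ Subsemigroup.closure (BHset F (E F)) := by
          have := hsignedmem F g⁻¹ (hFsub (by simp)) hginv1
          rw [if_neg (by simp [hFgi'])] at this
          simpa using Subsemigroup.subset_closure this
        have hall : g⁻¹ * g ∈ Subsemigroup.closure (BHset F (E F)) := mul_mem m1 m2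
        rwa [inv_mul_cancel] at hall
    have : {F | E F g = true} ∪ {F | E F g⁻¹ = true} ∈ U :=
      U.toFilter.mem_of_superset hT hsub
    rcases Ultrafilter.union_mem_iff.mp this with h | h
    · exact Or.inl ⟨hg1, h⟩
    · exact Or.inr ⟨hginv1, h⟩
  -- asymmetry
  have Pasymm : ∀ g : G, P g → ¬ P g⁻¹ := by
    rintro g ⟨hg1, hgU⟩ ⟨hgi1, hgiU⟩
    have hS : {F | E F g = true} ∩ {F | E F g⁻¹ = true} ∩
        {F | ({g, g⁻¹} : Finset G) ⊆ F} ∈ U :=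
      Filter.inter_mem (Filter.inter_mem hgU hgiU) (hup _)
    obtain ⟨F, ⟨⟨hFg, hFgi⟩, hFsub⟩⟩ := Ultrafilter.nonempty_of_mem hS
    simp only [Set.mem_setOf_eq] at hFg hFgi
    apply hE F
    have m1 : g ∈ Subsemigroup.closure (BHset F (E F)) := by
      have := hsignedmem F g (hFsub (by simp)) hg1
      rw [if_pos hFg] at this
      exact Subsemigroup.subset_closure this
    have m2 : g⁻¹ ∈ Subsemigroup.closure (BHset F (E F)) := by
      have := hsignedmem F g⁻¹ (hFsub (by simp)) hgi1
      rw [if_pos hFgi] at this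
      exact Subsemigroup.subset_closure this
    have hall : g * g⁻¹ ∈ Subsemigroup.closure (BHset F (E F)) := mul_mem m1 m2
    rwa [mul_inv_cancel] at hall
  -- build the order
  refine ⟨fun g h => P (g⁻¹ * h), ?_, ?_⟩
  · refine { trichotomous := ?_, irrefl := ?_, trans := ?_ }
    · intro g h hn1 hn2
      by_cases hgh : g = h
      · exact hgh
      · have h1 : g⁻¹ * h ≠ 1 := fun e => hgh (by
          have := congrArg (g * ·) e
          simpa [mul_assoc] using this.symm)
        rcases Ptotal _ h1 with hp | hp
        · exact absurd hp hn1
        · refine (hn2 ?_).elim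
          simpa [mul_inv_rev] using hp
    · intro g hp
      exact hp.1 (by simp)
    · intro g h k hgh hhk
      by_cases hgk : g⁻¹ * k = 1
      · exfalso
        have hk : k = g := by
          have := congrArg (g * ·) hgk
          simpa [mul_assoc] using this
        subst hk
        exact Pasymm _ hgh (by simpa [mul_inv_rev] using hhk)
      · have := Pmul _ _ hgh hhk (by simpa [mul_assoc] using hgk)
        simpa [mul_assoc] using this
  · intro f g h hp
    simpa [mul_inv_rev, mul_assoc] using hp
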